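/- Let F_{q^m} = F_q[α] and 1 ≤ ρ ≤ min{k,m}. The F_q-subspace U = {(u,w) : u ∈ F_q^ρ, w ∈ F_{q^m}^{k-ρ}} of F_{q^m}^k (an [m(k-ρ)+ρ, k]_{q^m/q} system) is rank-ρ-saturating. In particular s_{q^m/q}(k,ρ) ≤ m(k-ρ)+ρ. -/

import Mathlib

/-- `U` covers with radius `r`: every vector of `F_{q^m}^k` lies in the `F_{q^m}`-span
of an `F_q`-subspace of `U` of `F_q`-dimension at most `r`. -/
def RkCovers (K : Type*) {L : Type*} [Field K] [Field L] [Algebra K L]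
    {ι : Type*} (U : Submodule K (ι → L)) (r : ℕ) : Prop :=
  ∀ v : ι → L, ∃ S : Submodule K (ι → L), S ≤ U ∧ Module.finrank K S ≤ r ∧
    v ∈ Submodule.span L (S : Set (ι → L))

/-- `U` is rank-`ρ`-saturating: it covers with radius `ρ` and `ρ` is minimal. -/
def IsRankSat (K : Type*) {L : Type*} [Field K] [Field L] [Algebra K L]
    {ι : Type*} (U : Submodule K (ι → L)) (ρ : ℕ) : Prop :=
  RkCovers K U ρ ∧ ∀ r < ρ, ¬ RkCovers K U r

/-- `s_{q^m/q}(k, ρ)`: the minimal `F_q`-dimension of a rank-`ρ`-saturating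
`[n,k]_{q^m/q}` system in `F_{q^m}^k`. -/
noncomputable def sMin (K L : Type*) [Field K] [Field L] [Algebra K L] (k ρ : ℕ) : ℕ :=
  sInf {n : ℕ | ∃ U : Submodule K (Fin k → L),
    Module.finrank K U = n ∧ Submodule.span L (U : Set (Fin k → L)) = ⊤ ∧
      IsRankSat K U ρ}

/-- The `[m(k-ρ)+ρ, k]_{q^m/q}` system `U = {(u, w) : u ∈ F_q^ρ, w ∈ F_{q^m}^{k-ρ}}`:
vectors of `F_{q^m}^k` whose first `ρ` coordinates lie in `F_q`. -/
noncomputable def mixedSystem (K L : Type*) [Field K] [Field L] [Algebra K L]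
    (k ρ : ℕ) : Submodule K (Fin k → L) :=
  ⨅ i : Fin k, ⨅ _ : (i : ℕ) < ρ,
    Submodule.comap (LinearMap.proj i : (Fin k → L) →ₗ[K] L)
      (LinearMap.range (Algebra.linearMap K L))

section Aux
variable {K L : Type*} [Field K] [Field L] [Algebra K L] {k ρ : ℕ}

lemma mem_mixedSystem_iff {x : Fin k → L} :
    x ∈ mixedSystem K L k ρ ↔ ∀ i : Fin k, (i : ℕ) < ρ → ∃ c : K, algebraMap K L c = x i := by
  simp [mixedSystem, Submodule.mem_iInf, Algebra.linearMap_apply]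

/-- The parametrization of the mixed system. -/
noncomputable def mixedMap (K L : Type*) [Field K] [Field L] [Algebra K L] (k ρ : ℕ)
    (hρk : ρ ≤ k) : ((Fin ρ → K) × (Fin (k - ρ) → L)) →ₗ[K] (Fin k → L) :=
  LinearMap.pi fun i : Fin k =>
    if h : (i : ℕ) < ρ then
      (Algebra.linearMap K L) ∘ₗ (LinearMap.proj (⟨(i : ℕ), h⟩ : Fin ρ)) ∘ₗ
        (LinearMap.fst K (Fin ρ → K) (Fin (k - ρ) → L))
    else
      (LinearMap.proj (⟨(i : ℕ) - ρ, by have := i.isLt; omega⟩ : Fin (k - ρ))) ∘ₗ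
        (LinearMap.snd K (Fin ρ → K) (Fin (k - ρ) → L))

lemma mixedMap_apply_pos (hρk : ρ ≤ k) (u : Fin ρ → K) (w : Fin (k - ρ) → L) (i : Fin k)
    (h : (i : ℕ) < ρ) :
    mixedMap K L k ρ hρk (u, w) i = algebraMap K L (u ⟨(i : ℕ), h⟩) := by
  simp [mixedMap, LinearMap.pi_apply, dif_pos h]

lemma mixedMap_apply_neg (hρk : ρ ≤ k) (u : Fin ρ → K) (w : Fin (k - ρ) → L) (i : Fin k)
    (h : ¬ (i : ℕ) < ρ) :
    mixedMap K L k ρ hρk (u, w) i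
      = w ⟨(i : ℕ) - ρ, by have := i.isLt; omega⟩ := by
  simp [mixedMap, LinearMap.pi_apply, dif_neg h]

lemma mixedMap_injective (hρk : ρ ≤ k) : Function.Injective (mixedMap K L k ρ hρk) := by
  rw [← LinearMap.ker_eq_bot]
  ext ⟨u, w⟩
  simp only [LinearMap.mem_ker, Submodule.mem_bot, Prod.mk_eq_zero]
  constructor
  · intro h
    constructor
    · funext j
      have hj : (j : ℕ) < ρ := j.isLt
      have := congrFun h (Fin.castLE hρk j)
      rw [mixedMap_apply_pos hρk u w _ hj] at this
      have : algebraMap K L (u j) = 0 := this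
      simpa using (algebraMap K L).injective (by simpa using this)
    · funext j
      have hj : ρ + (j : ℕ) < k := by have := j.isLt; omega
      have := congrFun h (⟨ρ + (j : ℕ), hj⟩ : Fin k)
      rw [mixedMap_apply_neg hρk u w _ (by simp)] at this
      convert this using 2
      ext
      simp
      rfl
  · rintro ⟨rfl, rfl⟩
    exact (mixedMap K L k ρ hρk).map_zero

lemma range_mixedMap (hρk : ρ ≤ k) :
    LinearMap.range (mixedMap K L k ρ hρk) = mixedSystem K L k ρ := by
  ext x
  rw [LinearMap.mem_range, mem_mixedSystem_iff]
  constructor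
  · rintro ⟨⟨u, w⟩, rfl⟩ i hi
    exact ⟨u ⟨(i : ℕ), hi⟩, (mixedMap_apply_pos hρk u w i hi).symm⟩
  · intro hx
    choose c hc using hx
    refine ⟨(fun j => c (Fin.castLE hρk j) j.isLt,
      fun j => x ⟨ρ + (j : ℕ), by have := j.isLt; omega⟩), ?_⟩
    funext i
    by_cases h : (i : ℕ) < ρ
    · rw [mixedMap_apply_pos hρk _ _ i h]
      exact hc i h
    · rw [mixedMap_apply_neg hρk _ _ i h]
      congr 1
      ext
      simp
      omega

lemma finrank_mixedSystem (hρk : ρ ≤ k) [FiniteDimensional K L] :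
    Module.finrank K (mixedSystem K L k ρ) = Module.finrank K L * (k - ρ) + ρ := by
  rw [← range_mixedMap hρk, LinearMap.finrank_range_of_inj (mixedMap_injective hρk),
    Module.finrank_prod, Module.finrank_pi, Module.finrank_pi_fintype]
  simp [Finset.sum_const, mul_comm, add_comm]

lemma span_mixedSystem_eq_top :
    Submodule.span L (mixedSystem K L k ρ : Set (Fin k → L)) = ⊤ := by
  rw [eq_top_iff, ← (Pi.basisFun L (Fin k)).span_eq, Submodule.span_le]
  rintro _ ⟨i, rfl⟩
  apply Submodule.subset_span
  show (Pi.basisFun L (Fin k)) i ∈ mixedSystem K L k ρ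
  rw [mem_mixedSystem_iff]
  intro j hj
  refine ⟨if j = i then 1 else 0, ?_⟩
  by_cases h : j = i <;> simp [Pi.basisFun_apply, Pi.single_apply, h]

lemma mixedSystem_covers (hρ : 1 ≤ ρ) (hρk : ρ ≤ k) :
    RkCovers K (mixedSystem K L k ρ) ρ := by
  intro v
  classical
  set p : Fin k := ⟨ρ - 1, by omega⟩ with hp
  have hpv : (p : ℕ) = ρ - 1 := rfl
  have hpρ : (p : ℕ) < ρ := by omega
  set lam : L := if v p = 0 then 1 else v p with hlam
  have hlam0 : lam ≠ 0 := by
    rw [hlam]; split_ifs with h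
    · exact one_ne_zero
    · exact h
  set w : Fin k → L := fun i => if (i : ℕ) < ρ then 0 else v i with hw
  have hwlt : ∀ i : Fin k, (i : ℕ) < ρ → w i = 0 := fun i hi => if_pos hi
  have hwge : ∀ i : Fin k, ¬ (i : ℕ) < ρ → w i = v i := fun i hi => if_neg hi
  set z : Fin k → L := lam⁻¹ • (v p • (Pi.single p 1 : Fin k → L) + w) with hz
  set f : Fin ρ → (Fin k → L) :=
    fun j => if (j : ℕ) < ρ - 1 then Pi.single (Fin.castLE hρk j) 1 else z with hf
  have hlz : lam • z = v p • (Pi.single p 1 : Fin k → L) + w := by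
    rw [hz, smul_smul, mul_inv_cancel₀ hlam0, one_smul]
  refine ⟨Submodule.span K (Set.range f), ?_, ?_, ?_⟩
  · rw [Submodule.span_le]
    rintro _ ⟨j, rfl⟩
    rw [SetLike.mem_coe, mem_mixedSystem_iff]
    intro i hi
    rw [hf]
    dsimp only
    split_ifs with hj
    · refine ⟨if i = Fin.castLE hρk j then 1 else 0, ?_⟩
      by_cases h : i = Fin.castLE hρk j <;> simp [Pi.single_apply, h]
    · -- z coordinate i, i < ρ
      rw [hz]
      by_cases hip : i = p
      · refine ⟨if v p = 0 then 0 else 1, ?_⟩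
        rw [hip]
        simp only [Pi.smul_apply, Pi.add_apply, Pi.single_eq_same, smul_eq_mul, mul_one]
        rw [hwlt p hpρ, add_zero, hlam]
        split_ifs with h <;> simp [h]
      · refine ⟨0, ?_⟩
        have h1 : (Pi.single p 1 : Fin k → L) i = 0 := Pi.single_eq_of_ne hip 1
        simp [h1, hwlt i hi]
  · refine le_trans (finrank_range_le_card f) (by simp)
  · rw [Submodule.span_span_of_tower]
    have hv : v = ∑ j : Fin ρ,
        (if (j : ℕ) < ρ - 1 then v (Fin.castLE hρk j) else lam) • f j := by
      funext i
      rw [Finset.sum_apply]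
      by_cases hi : (i : ℕ) < ρ
      · rw [Finset.sum_eq_single (⟨(i : ℕ), hi⟩ : Fin ρ)]
        · by_cases hi' : (i : ℕ) < ρ - 1
          · rw [hf]; simp only [hi', if_true, Pi.smul_apply]
            have h0 : Fin.castLE hρk (⟨(i : ℕ), hi⟩ : Fin ρ) = i := rfl
            rw [h0, Pi.single_eq_same, smul_eq_mul, mul_one]
          · rw [hf]; simp only [hi', if_false, Pi.smul_apply]
            have hip : i = p := by ext; rw [hpv]; omega
            have hzi := congrFun hlz i
            rw [Pi.smul_apply] at hzi
            rw [hzi, Pi.add_apply, Pi.smul_apply, hwlt i hi, add_zero, hip,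
              Pi.single_eq_same, smul_eq_mul, mul_one]
        · intro j _ hj
          rw [hf]; dsimp only
          split_ifs with hj'
          · rw [Pi.smul_apply]
            have h1 : (Pi.single (Fin.castLE hρk j) 1 : Fin k → L) i = 0 := by
              apply Pi.single_eq_of_ne
              intro h
              have hvv : (i : ℕ) = (j : ℕ) := congrArg Fin.val h
              exact hj (Fin.ext hvv.symm)
            rw [h1, smul_eq_mul, mul_zero]
          · rw [Pi.smul_apply]
            have hjv : (j : ℕ) = ρ - 1 := by have := j.isLt; omega
            have hine : (i : ℕ) ≠ ρ - 1 := by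
              intro h; exact hj (Fin.ext (by rw [hjv, h]))
            have hzi := congrFun hlz i
            rw [Pi.smul_apply] at hzi
            rw [hzi, Pi.add_apply, Pi.smul_apply]
            have h1 : (Pi.single p 1 : Fin k → L) i = 0 := by
              apply Pi.single_eq_of_ne; intro h
              exact hine (by rw [h, hpv])
            rw [h1, hwlt i hi, smul_eq_mul, mul_zero, add_zero]
        · intro h; exact absurd (Finset.mem_univ _) h
      · rw [Finset.sum_eq_single (⟨ρ - 1, by omega⟩ : Fin ρ)]
        · have hc : ¬ ((⟨ρ - 1, by omega⟩ : Fin ρ) : ℕ) < ρ - 1 := by simp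
          rw [hf]; simp only [hc, if_false, Pi.smul_apply]
          have hzi := congrFun hlz i
          rw [Pi.smul_apply] at hzi
          rw [hzi, Pi.add_apply, Pi.smul_apply]
          have h1 : (Pi.single p 1 : Fin k → L) i = 0 := by
            apply Pi.single_eq_of_ne; intro h
            have : (i : ℕ) = ρ - 1 := by rw [h, hpv]
            omega
          rw [h1, hwge i hi, smul_eq_mul, mul_zero, zero_add]
        · intro j _ hj
          rw [hf]; dsimp only
          split_ifs with hj'
          · rw [Pi.smul_apply]
            have h1 : (Pi.single (Fin.castLE hρk j) 1 : Fin k → L) i = 0 := by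
              apply Pi.single_eq_of_ne; intro h
              have hvv : (i : ℕ) = (j : ℕ) := congrArg Fin.val h
              have := j.isLt; omega
            rw [h1, smul_eq_mul, mul_zero]
          · exfalso; apply hj; ext; simp only; have := j.isLt; omega
        · intro h; exact absurd (Finset.mem_univ _) h
    rw [hv]
    exact Submodule.sum_mem _ fun j _ =>
      Submodule.smul_mem _ _ (Submodule.subset_span ⟨j, rfl⟩)

lemma mixedSystem_not_covers [FiniteDimensional K L] (hρk : ρ ≤ k)
    (hρm : ρ ≤ Module.finrank K L) {r : ℕ} (hr : r < ρ) :
    ¬ RkCovers K (mixedSystem K L k ρ) r := by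
  classical
  intro hcov
  set m := Module.finrank K L with hm
  let b : Module.Basis (Fin m) K L := Module.finBasis K L
  -- the test vector
  set v : Fin k → L := fun i => if h : (i : ℕ) < ρ then b ⟨(i : ℕ), by omega⟩ else 0 with hv
  obtain ⟨S, hSU, hSr, hvS⟩ := hcov v
  haveI : FiniteDimensional K (Fin k → L) := inferInstance
  set n := Module.finrank K S with hn
  have hnr : n ≤ r := hSr
  let bS : Module.Basis (Fin n) K S := Module.finBasis K S
  -- projection onto the first ρ coordinates
  let π : (Fin k → L) →ₗ[L] (Fin ρ → L) := LinearMap.funLeft L L (Fin.castLE hρk)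
  -- the K-span of the basis of S, inside the ambient space
  have hSspan : Submodule.span K (Set.range fun t => (bS t : Fin k → L)) = S := by
    have h1 : (Set.range fun t => (bS t : Fin k → L)) = S.subtype '' Set.range bS := by
      rw [← Set.range_comp]; rfl
    rw [h1, ← Submodule.map_span, bS.span_eq, Submodule.map_top, Submodule.range_subtype]
  -- the projected generators
  set g : Fin n → (Fin ρ → L) := fun t => π (bS t : Fin k → L) with hg
  set W : Submodule L (Fin ρ → L) := Submodule.span L (Set.range g) with hW
  -- v's projection lies in W
  have hπv : π v ∈ W := by
    have h1 : π v ∈ Submodule.map π (Submodule.span L (S : Set (Fin k → L))) :=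
      Submodule.mem_map_of_mem hvS
    rw [Submodule.map_span] at h1
    refine Submodule.span_le.2 ?_ h1
    rintro _ ⟨x, hx, rfl⟩
    have hx' : x ∈ Submodule.span K (Set.range fun t => (bS t : Fin k → L)) := by
      rw [hSspan]; exact hx
    have h2 : π x ∈ Submodule.map (π.restrictScalars K)
        (Submodule.span K (Set.range fun t => (bS t : Fin k → L))) :=
      Submodule.mem_map_of_mem hx'
    rw [Submodule.map_span] at h2
    have h3 : (π.restrictScalars K) '' (Set.range fun t => (bS t : Fin k → L))
        = Set.range g := by
      rw [← Set.range_comp]; rfl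
    rw [h3] at h2
    exact Submodule.span_le_restrictScalars K L (Set.range g) h2
  -- W has small L-dimension
  have hWr : Module.finrank L W ≤ r := le_trans (by simpa [Set.finrank, hW] using finrank_range_le_card g) hnr
  -- coordinates of the generators are K-rational
  have hrat : ∀ t (j : Fin ρ), ∃ c : K, algebraMap K L c = g t j := by
    intro t j
    have hmem := hSU (bS t).2
    rw [mem_mixedSystem_iff] at hmem
    exact hmem (Fin.castLE hρk j) j.isLt
  choose C hC using hrat
  -- the coordinatewise algebraMap
  let E : (Fin ρ → K) →ₗ[K] (Fin ρ → L) :=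
    LinearMap.pi fun j => (Algebra.linearMap K L) ∘ₗ (LinearMap.proj j)
  have hEC : ∀ t, E (C t) = g t := by
    intro t; funext j; exact hC t j
  set VK : Submodule K (Fin ρ → K) := Submodule.span K (Set.range C) with hVK
  have hVKtop : VK ≠ ⊤ := by
    intro htop
    -- then W = ⊤, contradiction with its small rank
    have hsingle : ∀ j : Fin ρ, (Pi.single j 1 : Fin ρ → L) ∈ W := by
      intro j
      have h1 : (Pi.single j 1 : Fin ρ → K) ∈ VK := htop ▸ Submodule.mem_top
      have h2 : E (Pi.single j 1) ∈ Submodule.map E VK := Submodule.mem_map_of_mem h1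
      rw [hVK, Submodule.map_span] at h2
      have h3 : E '' Set.range C = Set.range g := by
        rw [← Set.range_comp]
        have : (⇑E ∘ C) = g := funext hEC
        rw [this]
      rw [h3] at h2
      have h4 : E (Pi.single j 1) = (Pi.single j 1 : Fin ρ → L) := by
        funext j'
        have he : E (Pi.single j 1) j' = algebraMap K L ((Pi.single j 1 : Fin ρ → K) j') := rfl
        rw [he, Pi.single_apply, Pi.single_apply, apply_ite (algebraMap K L), map_one, map_zero]
      rw [h4] at h2
      exact Submodule.span_le_restrictScalars K L (Set.range g) h2
    have hWtop : W = ⊤ := by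
      rw [eq_top_iff, ← (Pi.basisFun L (Fin ρ)).span_eq, Submodule.span_le]
      rintro _ ⟨j, rfl⟩
      simpa [Pi.basisFun_apply] using hsingle j
    rw [hWtop] at hWr
    have : Module.finrank L (⊤ : Submodule L (Fin ρ → L)) = ρ := by
      rw [finrank_top, Module.finrank_pi]; simp
    omega
  -- a nonzero functional vanishing on VK
  obtain ⟨φ, hφ0, hφ⟩ : ∃ φ : Module.Dual K (Fin ρ → K), φ ≠ 0 ∧ VK.map φ = ⊥ :=
    VK.exists_dual_map_eq_bot_of_lt_top (lt_top_iff_ne_top.2 hVKtop) inferInstance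
  set c : Fin ρ → K := fun j => φ (Pi.single j 1) with hc'
  have hφeq : ∀ y : Fin ρ → K, φ y = ∑ j, y j * c j := by
    intro y
    conv_lhs => rw [pi_eq_sum_univ y, map_sum]
    refine Finset.sum_congr rfl fun j _ => ?_
    rw [map_smul, smul_eq_mul]
    congr 2
    funext j'
    rw [Pi.single_apply]
    exact if_congr eq_comm rfl rfl
  have hcne : c ≠ 0 := by
    intro h
    apply hφ0
    refine LinearMap.ext fun y => ?_
    rw [hφeq y, LinearMap.zero_apply]
    refine Finset.sum_eq_zero fun j _ => ?_
    rw [congrFun h j, Pi.zero_apply, mul_zero]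
  -- the L-extension of φ
  set φL : (Fin ρ → L) →ₗ[L] L := ∑ j : Fin ρ, algebraMap K L (c j) • LinearMap.proj j with hφL
  have hφLapp : ∀ x : Fin ρ → L, φL x = ∑ j, algebraMap K L (c j) * x j := by
    intro x
    rw [hφL, LinearMap.sum_apply]
    refine Finset.sum_congr rfl fun j _ => ?_
    rw [LinearMap.smul_apply, LinearMap.proj_apply, smul_eq_mul]
  have hφLW : ∀ x ∈ W, φL x = 0 := by
    intro x hx
    have : W ≤ LinearMap.ker φL := by
      rw [hW, Submodule.span_le]
      rintro _ ⟨t, rfl⟩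
      rw [SetLike.mem_coe, LinearMap.mem_ker, hφLapp]
      have : ∀ j, algebraMap K L (c j) * g t j = algebraMap K L (c j * C t j) := by
        intro j; rw [map_mul, hC]
      rw [Finset.sum_congr rfl fun j _ => this j, ← map_sum]
      have hCt : φ (C t) = 0 := by
        have : φ (C t) ∈ VK.map φ := Submodule.mem_map_of_mem (Submodule.subset_span ⟨t, rfl⟩)
        rw [hφ] at this
        exact this
      rw [hφeq] at hCt
      have hCt' : ∑ j, c j * C t j = 0 := by
        rw [← hCt]
        exact Finset.sum_congr rfl fun j _ => mul_comm _ _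
      rw [hCt', map_zero]
    exact this hx
  -- evaluate on the projection of v
  have hπvval : ∀ j : Fin ρ, π v j = b (Fin.castLE hρm j) := by
    intro j
    show v (Fin.castLE hρk j) = _
    rw [hv]
    dsimp only
    rw [dif_pos (show ((Fin.castLE hρk j : Fin k) : ℕ) < ρ from j.isLt)]
    rfl
  have hzero : ∑ j : Fin ρ, c j • b (Fin.castLE hρm j) = 0 := by
    have h0 := hφLW _ hπv
    rw [hφLapp] at h0
    rw [← h0]
    congr 1; funext j
    rw [hπvval j, Algebra.smul_def]
  -- linear independence gives c = 0
  have hli : LinearIndependent K (fun j : Fin ρ => b (Fin.castLE hρm j)) :=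
    b.linearIndependent.comp (Fin.castLE hρm) (Fin.castLE_injective hρm)
  have := Fintype.linearIndependent_iff.1 hli c hzero
  exact hcne (funext fun j => this j)

end Aux


/-- For `1 ≤ ρ ≤ min{k, m}`, the system `{(u,w) : u ∈ F_q^ρ, w ∈ F_{q^m}^{k-ρ}}` is
rank-`ρ`-saturating; in particular `s_{q^m/q}(k, ρ) ≤ m(k-ρ) + ρ`. -/
theorem mixedSystem_rankSat (K L : Type*) [Field K] [Field L] [Algebra K L]
    [Fintype K] [Fintype L] {k ρ : ℕ}
    (hρ : 1 ≤ ρ) (hρk : ρ ≤ k) (hρm : ρ ≤ Module.finrank K L) :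
    IsRankSat K (mixedSystem K L k ρ) ρ ∧
      sMin K L k ρ ≤ Module.finrank K L * (k - ρ) + ρ := by
  classical
  haveI : Module.Finite K L := Module.Finite.of_finite
  have hsat : IsRankSat K (mixedSystem K L k ρ) ρ :=
    ⟨mixedSystem_covers hρ hρk, fun r hr => mixedSystem_not_covers hρk hρm hr⟩
  refine ⟨hsat, Nat.sInf_le ?_⟩
  exact ⟨mixedSystem K L k ρ, finrank_mixedSystem hρk, span_mixedSystem_eq_top, hsat⟩
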